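/- Adaptive composition of k algorithms each of which is ε-differentially private (pure DP) satisfies (½kε² + ε√(2k·log(1/δ)), δ)-differential privacy, for every δ ∈ (0,1). -/

import Mathlib

open scoped BigOperators

/-- Law of the first `k` outputs of an adaptive composition with per-round conditional
distributions `p t h`. -/
noncomputable def joint {𝒪 : Type*} (p : ℕ → List 𝒪 → PMF 𝒪) : ℕ → PMF (List 𝒪)
  | 0 => PMF.pure []
  | (k + 1) => (joint p (k : ℕ)).bind fun h => (p k h).map fun a => h ++ [a]

open Real

/-- `sinh t ≤ t * cosh t` for `t ≥ 0`. -/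
lemma sinh_le_mul_cosh {t : ℝ} (ht : 0 ≤ t) : Real.sinh t ≤ t * Real.cosh t := by
  have hder : ∀ x : ℝ, HasDerivAt (fun y => y * Real.cosh y - Real.sinh y)
      (x * Real.sinh x) x := by
    intro x
    have h := ((hasDerivAt_id x).mul (Real.hasDerivAt_cosh x)).sub (Real.hasDerivAt_sinh x)
    exact h.congr_deriv (by simp)
  have hmono : MonotoneOn (fun y => y * Real.cosh y - Real.sinh y) (Set.Ici (0:ℝ)) := by
    apply monotoneOn_of_deriv_nonneg (convex_Ici 0)
    · exact (Continuous.sub (continuous_id.mul Real.continuous_cosh)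
        Real.continuous_sinh).continuousOn
    · intro x hx
      exact (hder x).differentiableAt.differentiableWithinAt
    · intro x hx
      rw [(hder x).deriv]
      rw [interior_Ici] at hx
      exact mul_nonneg (le_of_lt hx) (Real.sinh_nonneg_iff.2 (le_of_lt hx))
  have h0 : (0:ℝ) * Real.cosh 0 - Real.sinh 0 = 0 := by simp
  have := hmono (Set.self_mem_Ici) (Set.mem_Ici.2 ht) ht
  simp only [h0] at this
  linarith [this]

/-- `cosh v * exp (-(v^2)/2)` is antitone on `[0, ∞)`. -/
lemma cosh_mul_exp_le {u v : ℝ} (hu : 0 ≤ u) (huv : u ≤ v) :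
    Real.cosh v * Real.exp (-(v^2)/2) ≤ Real.cosh u * Real.exp (-(u^2)/2) := by
  have hder : ∀ x : ℝ, HasDerivAt (fun y => Real.cosh y * Real.exp (-(y^2)/2))
      (Real.sinh x * Real.exp (-(x^2)/2) + Real.cosh x * (Real.exp (-(x^2)/2) * (-x))) x := by
    intro x
    have h1 : HasDerivAt (fun y : ℝ => -(y^2)/2) (-x) x := by
      have := ((hasDerivAt_pow 2 x).neg).div_const 2
      exact this.congr_deriv (by norm_num; ring)
    have h2 : HasDerivAt (fun y : ℝ => Real.exp (-(y^2)/2)) (Real.exp (-(x^2)/2) * (-x)) x :=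
      (Real.hasDerivAt_exp _).comp x h1
    exact (Real.hasDerivAt_cosh x).mul h2
  have hanti : AntitoneOn (fun y => Real.cosh y * Real.exp (-(y^2)/2)) (Set.Ici (0:ℝ)) := by
    apply antitoneOn_of_deriv_nonpos (convex_Ici 0)
    · exact (Real.continuous_cosh.mul (Real.continuous_exp.comp
        (by continuity))).continuousOn
    · intro x hx
      exact (hder x).differentiableAt.differentiableWithinAt
    · intro x hx
      rw [(hder x).deriv]
      rw [interior_Ici] at hx
      have h3 : Real.sinh x ≤ x * Real.cosh x := sinh_le_mul_cosh (le_of_lt hx)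
      have h4 : 0 < Real.exp (-(x^2)/2) := Real.exp_pos _
      nlinarith [h4]
  exact hanti (Set.mem_Ici.2 hu) (Set.mem_Ici.2 (hu.trans huv)) huv

/-- Chord bound for the convex function `t ↦ t ^ c`. -/
lemma rpow_le_chord {a b t c : ℝ} (ha : 0 < a) (hab : a < b) (hat : a ≤ t) (htb : t ≤ b)
    (hc : 1 ≤ c) :
    t ^ c ≤ ((b - t) * a ^ c + (t - a) * b ^ c) / (b - a) := by
  have hba : 0 < b - a := by linarith
  set s : ℝ := (b - t) / (b - a) with hs
  have hs0 : 0 ≤ s := div_nonneg (by linarith) hba.le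
  have hs1 : s ≤ 1 := by
    rw [div_le_one hba]; linarith
  have hcomb : s * a + (1 - s) * b = t := by
    rw [hs]
    field_simp
    ring
  have hconv := (convexOn_rpow hc).2 (Set.mem_Ici.2 ha.le) (Set.mem_Ici.2 (ha.le.trans hab.le))
    hs0 (by linarith) (by linarith : s + (1 - s) = 1)
  simp only [smul_eq_mul] at hconv
  rw [hcomb] at hconv
  calc t ^ c ≤ s * a ^ c + (1 - s) * b ^ c := hconv
    _ = ((b - t) * a ^ c + (t - a) * b ^ c) / (b - a) := by
        rw [hs]
        field_simp
        ring

/-- The value of the chord at `1` is at most `exp (c*(c-1)*ε^2/2)`. -/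
lemma chord_at_one_le {ε c : ℝ} (hε : 0 < ε) (hc : 1 ≤ c) :
    ((exp ε - 1) * exp (-(c * ε)) + (1 - exp (-ε)) * exp (c * ε)) / (exp ε - exp (-ε))
      ≤ exp (c * (c - 1) * ε ^ 2 / 2) := by
  set u : ℝ := ε / 2 with hu
  set v : ℝ := (c - 1/2) * ε with hv
  have hu0 : 0 ≤ u := by positivity
  have huv : u ≤ v := by
    rw [hu, hv]; nlinarith
  have hx : (0:ℝ) < exp (ε/2) := exp_pos _
  have hy : (0:ℝ) < exp (c * ε) := exp_pos _
  set x : ℝ := exp (ε/2) with hxd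
  set y : ℝ := exp (c * ε) with hyd
  have he1 : exp ε = x ^ 2 := by
    rw [hxd, sq, ← Real.exp_add]; norm_num
  have he2 : exp (-ε) = (x ^ 2)⁻¹ := by rw [← he1]; exact Real.exp_neg ε
  have he3 : exp (-(c * ε)) = y⁻¹ := by rw [hyd, ← Real.exp_neg]
  have hcoshu : Real.cosh u = (x + x⁻¹) / 2 := by
    rw [Real.cosh_eq, hu, hxd, Real.exp_neg]
  have hcoshv : Real.cosh v = (y / x + x / y) / 2 := by
    rw [Real.cosh_eq, hv, hxd, hyd]
    have h : (c - 1/2) * ε = c * ε - ε / 2 := by ring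
    rw [h, neg_sub, Real.exp_sub, Real.exp_sub]
  have hcoshu_pos : 0 < Real.cosh u := Real.cosh_pos u
  have hden : 0 < exp ε - exp (-ε) := by
    have : exp (-ε) < exp ε := Real.exp_lt_exp.2 (by linarith)
    linarith
  -- key identity: LHS = cosh v / cosh u
  have hkey : ((exp ε - 1) * exp (-(c * ε)) + (1 - exp (-ε)) * exp (c * ε)) / (exp ε - exp (-ε))
      = Real.cosh v / Real.cosh u := by
    rw [he1, he2, he3, hcoshu, hcoshv]
    rw [div_eq_div_iff (by nlinarith) (by positivity)]
    field_simp
    ring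
  rw [hkey, div_le_iff₀ (Real.cosh_pos u)]
  -- from antitonicity of cosh t * exp (-t^2/2)
  have hmono := cosh_mul_exp_le hu0 huv
  have hE : exp (-(u^2)/2) * exp (v^2/2) = exp (c * (c-1) * ε^2/2) := by
    rw [← Real.exp_add]; congr 1; rw [hu, hv]; ring
  calc Real.cosh v = Real.cosh v * exp (-(v^2)/2) * exp (v^2/2) := by
        rw [mul_assoc, ← Real.exp_add]
        simp only [neg_div, neg_add_cancel, Real.exp_zero, mul_one]
    _ ≤ Real.cosh u * exp (-(u^2)/2) * exp (v^2/2) :=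
        mul_le_mul_of_nonneg_right hmono (exp_pos _).le
    _ = Real.cosh u * exp (c * (c-1) * ε^2/2) := by rw [mul_assoc, hE]
    _ = exp (c * (c - 1) * ε ^ 2 / 2) * Real.cosh u := mul_comm _ _

open Real in
/-- Per-round moment bound: for `ε`-DP close PMFs `P, Q`,
`∑ P^c Q^{1-c} ≤ exp(c(c-1)ε²/2)`. -/
lemma step_bound {𝒪 : Type*} (P Q : PMF 𝒪) {ε c : ℝ} (hε : 0 < ε) (hc : 1 ≤ c)
    (h1 : ∀ a, P a ≤ ENNReal.ofReal (Real.exp ε) * Q a)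
    (h2 : ∀ a, Q a ≤ ENNReal.ofReal (Real.exp ε) * P a) :
    ∑' a, P a ^ c * Q a ^ (1 - c) ≤ ENNReal.ofReal (Real.exp (c * (c - 1) * ε ^ 2 / 2)) := by
  have hD : (0:ℝ) < exp ε - exp (-ε) := by
    have : exp (-ε) < exp ε := Real.exp_lt_exp.2 (by linarith)
    linarith
  set D : ℝ := exp ε - exp (-ε) with hDdef
  set A0 : ℝ := (exp ε * (exp (-ε)) ^ c - exp (-ε) * (exp ε) ^ c) / D with hA0
  set B0 : ℝ := ((exp ε) ^ c - (exp (-ε)) ^ c) / D with hB0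
  have hchord : ∀ t : ℝ, exp (-ε) ≤ t → t ≤ exp ε → t ^ c ≤ A0 + B0 * t := by
    intro t hta htb
    have hab : exp (-ε) < exp ε := Real.exp_lt_exp.2 (by linarith)
    have h := rpow_le_chord (Real.exp_pos (-ε)) hab hta htb hc
    calc t ^ c ≤ ((exp ε - t) * (exp (-ε)) ^ c + (t - exp (-ε)) * (exp ε) ^ c) / D := h
      _ = A0 + B0 * t := by
          rw [hA0, hB0]
          field_simp
          ring
  set g : 𝒪 → ℝ := fun a => A0 * (Q a).toReal + B0 * (P a).toReal with hgdef
  have hmain : ∀ a, 0 ≤ g a ∧ P a ^ c * Q a ^ (1 - c) ≤ ENNReal.ofReal (g a) := by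
    intro a
    by_cases hQ0 : Q a = 0
    · have hP0 : P a = 0 := by
        have h := h1 a
        rw [hQ0, mul_zero] at h
        exact le_antisymm h zero_le
      constructor
      · simp [hgdef, hQ0, hP0]
      · simp [hQ0, hP0, ENNReal.zero_rpow_of_pos (lt_of_lt_of_le zero_lt_one hc)]
    · set x : ℝ := (Q a).toReal with hxdef
      set y : ℝ := (P a).toReal with hydef
      have hx : 0 < x := ENNReal.toReal_pos hQ0 (PMF.apply_ne_top Q a)
      have hyx : y ≤ exp ε * x := by
        have h := ENNReal.toReal_mono
          (by exact ENNReal.mul_ne_top ENNReal.ofReal_ne_top (PMF.apply_ne_top Q a)) (h1 a)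
        rwa [ENNReal.toReal_mul, ENNReal.toReal_ofReal (Real.exp_nonneg ε)] at h
      have hxy : x ≤ exp ε * y := by
        have h := ENNReal.toReal_mono
          (by exact ENNReal.mul_ne_top ENNReal.ofReal_ne_top (PMF.apply_ne_top P a)) (h2 a)
        rwa [ENNReal.toReal_mul, ENNReal.toReal_ofReal (Real.exp_nonneg ε)] at h
      have hy : 0 < y := by nlinarith [Real.exp_pos ε]
      have hee : exp (-ε) * exp ε = 1 := by rw [← Real.exp_add]; simp
      have ht1 : exp (-ε) ≤ y / x := by
        rw [le_div_iff₀ hx]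
        nlinarith [mul_le_mul_of_nonneg_left hxy (Real.exp_pos (-ε)).le]
      have ht2 : y / x ≤ exp ε := by
        rw [div_le_iff₀ hx]
        exact hyx
      have hch := hchord (y / x) ht1 ht2
      have hpow : y ^ c * x ^ (1 - c) = x * (y / x) ^ c := by
        rw [Real.rpow_sub hx, Real.rpow_one, Real.div_rpow hy.le hx.le]
        field_simp
      have hreal : y ^ c * x ^ (1 - c) ≤ g a := by
        rw [hpow]
        calc x * (y / x) ^ c ≤ x * (A0 + B0 * (y / x)) :=
              mul_le_mul_of_nonneg_left hch hx.le
          _ = A0 * x + B0 * y := by field_simp; try ring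
      have hnn : 0 ≤ g a := by
        have h0 : (0:ℝ) ≤ y ^ c * x ^ (1 - c) := by positivity
        exact h0.trans hreal
      refine ⟨hnn, ?_⟩
      have hPa : P a = ENNReal.ofReal y := (ENNReal.ofReal_toReal (PMF.apply_ne_top P a)).symm
      have hQa : Q a = ENNReal.ofReal x := (ENNReal.ofReal_toReal (PMF.apply_ne_top Q a)).symm
      rw [hPa, hQa, ENNReal.ofReal_rpow_of_pos hy, ENNReal.ofReal_rpow_of_pos hx,
        ← ENNReal.ofReal_mul (Real.rpow_nonneg hy.le c)]
      exact ENNReal.ofReal_le_ofReal hreal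
  have hsumQ : Summable fun a => (Q a).toReal :=
    ENNReal.summable_toReal (by rw [Q.tsum_coe]; exact ENNReal.one_ne_top)
  have hsumP : Summable fun a => (P a).toReal :=
    ENNReal.summable_toReal (by rw [P.tsum_coe]; exact ENNReal.one_ne_top)
  have hsumg : Summable g := ((hsumQ.mul_left A0).add (hsumP.mul_left B0))
  have htsumQ : ∑' a, (Q a).toReal = 1 := by
    rw [← ENNReal.tsum_toReal_eq (fun a => PMF.apply_ne_top Q a), Q.tsum_coe]; rfl
  have htsumP : ∑' a, (P a).toReal = 1 := by
    rw [← ENNReal.tsum_toReal_eq (fun a => PMF.apply_ne_top P a), P.tsum_coe]; rfl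
  have htsumg : ∑' a, g a = A0 + B0 := by
    rw [hgdef, Summable.tsum_add (hsumQ.mul_left A0) (hsumP.mul_left B0), tsum_mul_left, tsum_mul_left,
      htsumQ, htsumP, mul_one, mul_one]
  have hAB : A0 + B0 ≤ exp (c * (c - 1) * ε ^ 2 / 2) := by
    have hac : (exp (-ε)) ^ c = exp (-(c * ε)) := by
      rw [← Real.exp_mul]; ring_nf
    have hbc : (exp ε) ^ c = exp (c * ε) := by
      rw [← Real.exp_mul]; ring_nf
    have heq : A0 + B0 = ((exp ε - 1) * exp (-(c * ε)) + (1 - exp (-ε)) * exp (c * ε)) / D := by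
      rw [hA0, hB0, ← add_div, hac, hbc]
      ring_nf
    rw [heq]
    exact chord_at_one_le hε hc
  calc ∑' a, P a ^ c * Q a ^ (1 - c) ≤ ∑' a, ENNReal.ofReal (g a) :=
        ENNReal.tsum_le_tsum (fun a => (hmain a).2)
    _ = ENNReal.ofReal (∑' a, g a) :=
        (ENNReal.ofReal_tsum_of_nonneg (fun a => (hmain a).1) hsumg).symm
    _ ≤ ENNReal.ofReal (exp (c * (c - 1) * ε ^ 2 / 2)) := by
        rw [htsumg]
        exact ENNReal.ofReal_le_ofReal hAB

lemma joint_nil {𝒪 : Type*} (p : ℕ → List 𝒪 → PMF 𝒪) (k : ℕ) :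
    joint p (k + 1) [] = 0 := by
  show ((joint p k).bind fun h => (p k h).map fun a => h ++ [a]) [] = 0
  rw [PMF.bind_apply]
  apply ENNReal.tsum_eq_zero.2
  intro h
  rw [PMF.map_apply]
  convert mul_zero _
  apply ENNReal.tsum_eq_zero.2
  intro a
  simp

lemma joint_snoc {𝒪 : Type*} (p : ℕ → List 𝒪 → PMF 𝒪) (k : ℕ) (h : List 𝒪) (a : 𝒪) :
    joint p (k + 1) (h ++ [a]) = joint p k h * p k h a := by
  classical
  show ((joint p k).bind fun h' => (p k h').map fun b => h' ++ [b]) (h ++ [a]) = _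
  rw [PMF.bind_apply]
  have key : ∀ h' : List 𝒪,
      joint p k h' * ((p k h').map fun b => h' ++ [b]) (h ++ [a])
        = if h' = h then joint p k h * p k h a else 0 := by
    intro h'
    by_cases hh : h' = h
    · subst hh
      rw [if_pos rfl, PMF.map_apply]
      congr 1
      refine (tsum_eq_single a ?_).trans ?_
      · intro b hb
        rw [if_neg]
        intro hcon
        have hab : a = b := by simpa using ((List.append_right_inj h').1 hcon)
        exact hb hab.symm
      · simp
    · rw [if_neg hh, PMF.map_apply]
      convert mul_zero _
      apply ENNReal.tsum_eq_zero.2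
      intro b
      rw [if_neg]
      intro hcon
      exact hh ((List.append_inj' hcon rfl).1).symm
  rw [tsum_congr key, tsum_ite_eq]

open Real in
lemma moment_bound {𝒪 : Type*} (p q : ℕ → List 𝒪 → PMF 𝒪) {ε c : ℝ} (hε : 0 < ε) (hc : 1 ≤ c)
    (hDP : ∀ (t : ℕ) (h : List 𝒪) (a : 𝒪),
      (p t h) a ≤ ENNReal.ofReal (Real.exp ε) * (q t h) a ∧
      (q t h) a ≤ ENNReal.ofReal (Real.exp ε) * (p t h) a) :
    ∀ k : ℕ, ∑' h : List 𝒪, (joint p k) h ^ c * (joint q k) h ^ (1 - c)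
      ≤ ENNReal.ofReal (Real.exp (k * (c * (c - 1) * ε ^ 2 / 2))) := by
  intro k
  induction k with
  | zero =>
    have h1 : ∀ h : List 𝒪, h ≠ [] →
        (joint p 0) h ^ c * (joint q 0) h ^ (1 - c) = 0 := by
      intro h hh
      show (PMF.pure [] h) ^ c * (PMF.pure [] h) ^ (1 - c) = 0
      rw [PMF.pure_apply, if_neg hh, ENNReal.zero_rpow_of_pos (lt_of_lt_of_le zero_lt_one hc),
        zero_mul]
    rw [tsum_eq_single ([] : List 𝒪) h1]
    show (PMF.pure ([]:List 𝒪) []) ^ c * (PMF.pure ([]:List 𝒪) []) ^ (1 - c) ≤ _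
    simp
  | succ k ih =>
    set F : List 𝒪 → ENNReal :=
      fun l => (joint p (k+1)) l ^ c * (joint q (k+1)) l ^ (1 - c) with hF
    have hc0 : (0:ℝ) < c := lt_of_lt_of_le zero_lt_one hc
    have hFnil : F [] = 0 := by
      rw [hF]
      simp only [joint_nil]
      rw [ENNReal.zero_rpow_of_pos hc0, zero_mul]
    have hinj : Function.Injective (fun x : List 𝒪 × 𝒪 => x.1 ++ [x.2]) := by
      rintro ⟨h1, a1⟩ ⟨h2, a2⟩ he
      simp only at he
      obtain ⟨e1, e2⟩ := List.append_inj' he rfl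
      simp only [List.cons.injEq, and_true] at e2
      exact Prod.ext e1 e2
    have hsupp : Function.support F ⊆ Set.range (fun x : List 𝒪 × 𝒪 => x.1 ++ [x.2]) := by
      intro l hl
      rcases l.eq_nil_or_concat' with rfl | ⟨L, b, rfl⟩
      · exact absurd hFnil hl
      · exact ⟨(L, b), rfl⟩
    calc ∑' l : List 𝒪, F l
        = ∑' x : List 𝒪 × 𝒪, F (x.1 ++ [x.2]) := (hinj.tsum_eq hsupp).symm
      _ = ∑' (h : List 𝒪) (a : 𝒪), F (h ++ [a]) := ENNReal.tsum_prod (f := fun h a => F (h ++ [a]))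
      _ = ∑' h : List 𝒪, ((joint p k h) ^ c * (joint q k h) ^ (1 - c))
            * ∑' a : 𝒪, (p k h a) ^ c * (q k h a) ^ (1 - c) := by
          apply tsum_congr
          intro h
          rw [← ENNReal.tsum_mul_left]
          apply tsum_congr
          intro a
          rw [hF]
          simp only
          rw [joint_snoc, joint_snoc,
            ENNReal.mul_rpow_of_ne_top (PMF.apply_ne_top _ _) (PMF.apply_ne_top _ _),
            ENNReal.mul_rpow_of_ne_top (PMF.apply_ne_top _ _) (PMF.apply_ne_top _ _)]
          ring
      _ ≤ ∑' h : List 𝒪, ((joint p k h) ^ c * (joint q k h) ^ (1 - c))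
            * ENNReal.ofReal (Real.exp (c * (c - 1) * ε ^ 2 / 2)) := by
          apply ENNReal.tsum_le_tsum
          intro h
          exact mul_le_mul_right (step_bound (p k h) (q k h) hε hc
            (fun a => (hDP k h a).1) (fun a => (hDP k h a).2)) _
      _ = (∑' h : List 𝒪, (joint p k h) ^ c * (joint q k h) ^ (1 - c))
            * ENNReal.ofReal (Real.exp (c * (c - 1) * ε ^ 2 / 2)) := ENNReal.tsum_mul_right
      _ ≤ ENNReal.ofReal (Real.exp (k * (c * (c - 1) * ε ^ 2 / 2)))
            * ENNReal.ofReal (Real.exp (c * (c - 1) * ε ^ 2 / 2)) := mul_le_mul_left ih _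
      _ = ENNReal.ofReal (Real.exp ((k + 1 : ℕ) * (c * (c - 1) * ε ^ 2 / 2))) := by
          rw [← ENNReal.ofReal_mul (Real.exp_nonneg _), ← Real.exp_add]
          congr 2
          push_cast
          ring

lemma ennreal_rpow_le_rpow_of_nonpos {x y : ENNReal} {z : ℝ} (hxy : x ≤ y) (hz : z ≤ 0) :
    y ^ z ≤ x ^ z := by
  rw [← neg_neg z, ENNReal.rpow_neg x, ENNReal.rpow_neg y]
  exact ENNReal.inv_le_inv.2 (ENNReal.rpow_le_rpow hxy (neg_nonneg.2 hz))

open Real in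
lemma dp_one_sided {𝒪 : Type*} (p q : ℕ → List 𝒪 → PMF 𝒪) {ε : ℝ} (hε : 0 < ε) {k : ℕ}
    (hk : 0 < k)
    (hDP : ∀ (t : ℕ) (h : List 𝒪) (a : 𝒪),
      (p t h) a ≤ ENNReal.ofReal (Real.exp ε) * (q t h) a ∧
      (q t h) a ≤ ENNReal.ofReal (Real.exp ε) * (p t h) a)
    {δ : ℝ} (hδ0 : 0 < δ) (hδ1 : δ < 1) (E : Set (List 𝒪)) :
    ∑' h : E, (joint p k) h ≤
      ENNReal.ofReal (Real.exp (k * ε ^ 2 / 2 + ε * Real.sqrt (2 * k * Real.log (1 / δ))))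
        * ∑' h : E, (joint q k) h + ENNReal.ofReal δ := by
  classical
  set L : ℝ := Real.log (1 / δ) with hL
  have hL0 : 0 < L := Real.log_pos (one_lt_one_div hδ0 hδ1)
  have hk0 : (0:ℝ) < (k:ℝ) := Nat.cast_pos.2 hk
  set B : ℝ := k * ε ^ 2 / 2 + ε * Real.sqrt (2 * k * L) with hB
  set s : ℝ := Real.sqrt (2 * L / (k * ε ^ 2)) with hs
  have hs0 : 0 < s := Real.sqrt_pos.2 (by positivity)
  set c : ℝ := 1 + s with hc
  have hc1 : 1 < c := by rw [hc]; linarith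
  have hcc : 1 ≤ c := hc1.le
  have hM := moment_bound p q hε hcc hDP k
  have hs2 : s ^ 2 = 2 * L / (k * ε ^ 2) := Real.sq_sqrt (by positivity)
  have hsw : s * ε * Real.sqrt (2 * k * L) = 2 * L := by
    have hw2 : Real.sqrt (2 * k * L) ^ 2 = 2 * k * L := Real.sq_sqrt (by positivity)
    have hsq : (s * ε * Real.sqrt (2 * k * L)) ^ 2 = (2 * L) ^ 2 := by
      rw [mul_pow, mul_pow, hs2, hw2]
      field_simp
    have h1 : 0 ≤ s * ε * Real.sqrt (2 * k * L) := by positivity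
    calc s * ε * Real.sqrt (2 * k * L)
        = Real.sqrt ((s * ε * Real.sqrt (2 * k * L)) ^ 2) := (Real.sqrt_sq h1).symm
      _ = Real.sqrt ((2 * L) ^ 2) := by rw [hsq]
      _ = 2 * L := Real.sqrt_sq (by positivity)
  have hkse : (k:ℝ) * s ^ 2 * ε ^ 2 / 2 = L := by
    rw [hs2]
    field_simp
  have hexp : (k:ℝ) * (c * (c - 1) * ε ^ 2 / 2) - (c - 1) * B = -L := by
    rw [hc, hB]
    linear_combination hkse - hsw
  set P : List 𝒪 → ENNReal := fun h => joint p k h with hP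
  set Q : List 𝒪 → ENNReal := fun h => joint q k h with hQ
  set A : Set (List 𝒪) := {h | ENNReal.ofReal (Real.exp B) * Q h < P h} with hA
  have hpoint : ∀ h : List 𝒪,
      P h ≤ ENNReal.ofReal (Real.exp B) * Q h + A.indicator P h := by
    intro h
    by_cases hh : h ∈ A
    · rw [Set.indicator_of_mem hh]
      exact le_add_self
    · rw [Set.indicator_of_notMem hh, add_zero]
      simp only [hA, Set.mem_setOf_eq, not_lt] at hh
      exact hh
  have hAle : ∀ h : List 𝒪, A.indicator P h ≤
      ENNReal.ofReal (Real.exp (-((c - 1) * B))) * (P h ^ c * Q h ^ (1 - c)) := by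
    intro h
    by_cases hh : h ∈ A
    · rw [Set.indicator_of_mem hh]
      have hmem : ENNReal.ofReal (Real.exp B) * Q h < P h := hh
      have hPne : P h ≠ 0 := by
        intro h0
        rw [h0] at hmem
        exact absurd hmem (not_lt.2 zero_le)
      have hPt : P h ≠ ⊤ := PMF.apply_ne_top _ _
      by_cases hQ0 : Q h = 0
      · rw [hQ0, ENNReal.zero_rpow_of_neg (by linarith : (1:ℝ) - c < 0)]
        rw [ENNReal.mul_top (by
          intro h0
          exact hPne ((ENNReal.rpow_eq_zero_iff.1 h0).elim
            (fun hh' => hh'.1)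
            (fun hh' => absurd hh'.1 hPt)))]
        rw [ENNReal.mul_top (ENNReal.ofReal_pos.2 (Real.exp_pos _)).ne']
        exact le_top
      · have hQt : Q h ≠ ⊤ := PMF.apply_ne_top _ _
        have hQle : Q h ≤ ENNReal.ofReal (Real.exp (-B)) * P h := by
          calc Q h = ENNReal.ofReal (Real.exp (-B)) * (ENNReal.ofReal (Real.exp B) * Q h) := by
                rw [← mul_assoc, ← ENNReal.ofReal_mul (Real.exp_nonneg _), ← Real.exp_add]
                simp
            _ ≤ ENNReal.ofReal (Real.exp (-B)) * P h := mul_le_mul_right hmem.le _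
        have hQpow : ENNReal.ofReal (Real.exp ((c - 1) * B)) * P h ^ (1 - c) ≤ Q h ^ (1 - c) := by
          have h2 := ennreal_rpow_le_rpow_of_nonpos hQle (by linarith : (1:ℝ) - c ≤ 0)
          refine le_trans (le_of_eq ?_) h2
          rw [ENNReal.mul_rpow_of_ne_top ENNReal.ofReal_ne_top hPt,
            ENNReal.ofReal_rpow_of_pos (Real.exp_pos _), ← Real.exp_mul]
          congr 2
          ring
        have hkey : ENNReal.ofReal (Real.exp ((c - 1) * B)) * P h ≤ P h ^ c * Q h ^ (1 - c) := by
          have hsplit : P h = P h ^ c * P h ^ (1 - c) := by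
            rw [← ENNReal.rpow_add c (1 - c) hPne hPt]
            norm_num
          calc ENNReal.ofReal (Real.exp ((c - 1) * B)) * P h
              = ENNReal.ofReal (Real.exp ((c - 1) * B)) * (P h ^ c * P h ^ (1 - c)) := by
                rw [← hsplit]
            _ = P h ^ c * (ENNReal.ofReal (Real.exp ((c - 1) * B)) * P h ^ (1 - c)) :=
                mul_left_comm _ _ _
            _ ≤ P h ^ c * Q h ^ (1 - c) := mul_le_mul_right hQpow _
        calc P h = ENNReal.ofReal (Real.exp (-((c - 1) * B)))
              * (ENNReal.ofReal (Real.exp ((c - 1) * B)) * P h) := by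
              rw [← mul_assoc, ← ENNReal.ofReal_mul (Real.exp_nonneg _), ← Real.exp_add]
              simp
          _ ≤ ENNReal.ofReal (Real.exp (-((c - 1) * B))) * (P h ^ c * Q h ^ (1 - c)) :=
              mul_le_mul_right hkey _
    · rw [Set.indicator_of_notMem hh]
      exact zero_le
  have htail : ∑' h : List 𝒪, A.indicator P h ≤ ENNReal.ofReal δ := by
    have hdelta : Real.exp (-((c - 1) * B) + k * (c * (c - 1) * ε ^ 2 / 2)) = δ := by
      have he : -((c - 1) * B) + k * (c * (c - 1) * ε ^ 2 / 2) = -L := by linarith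
      rw [he, hL, one_div, Real.log_inv, neg_neg, Real.exp_log hδ0]
    calc ∑' h : List 𝒪, A.indicator P h
        ≤ ∑' h : List 𝒪, ENNReal.ofReal (Real.exp (-((c - 1) * B)))
            * (P h ^ c * Q h ^ (1 - c)) := ENNReal.tsum_le_tsum hAle
      _ = ENNReal.ofReal (Real.exp (-((c - 1) * B)))
            * ∑' h : List 𝒪, P h ^ c * Q h ^ (1 - c) := ENNReal.tsum_mul_left
      _ ≤ ENNReal.ofReal (Real.exp (-((c - 1) * B)))
            * ENNReal.ofReal (Real.exp (k * (c * (c - 1) * ε ^ 2 / 2))) :=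
          mul_le_mul_right hM _
      _ = ENNReal.ofReal (Real.exp (-((c - 1) * B) + k * (c * (c - 1) * ε ^ 2 / 2))) := by
          rw [← ENNReal.ofReal_mul (Real.exp_nonneg _), ← Real.exp_add]
      _ = ENNReal.ofReal δ := by rw [hdelta]
  calc ∑' h : E, P h
      ≤ ∑' h : E, (ENNReal.ofReal (Real.exp B) * Q h + A.indicator P h) :=
        ENNReal.tsum_le_tsum (fun h => hpoint h)
    _ = ENNReal.ofReal (Real.exp B) * ∑' h : E, Q h + ∑' h : E, A.indicator P (h : List 𝒪) := by
        rw [ENNReal.tsum_add, ENNReal.tsum_mul_left]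
    _ ≤ ENNReal.ofReal (Real.exp B) * ∑' h : E, Q h + ENNReal.ofReal δ := by
        apply add_le_add_right
        calc ∑' h : E, A.indicator P (h : List 𝒪)
            ≤ ∑' h : List 𝒪, A.indicator P h :=
              ENNReal.tsum_comp_le_tsum_of_injective Subtype.val_injective _
          _ ≤ ENNReal.ofReal δ := htail

lemma triv_dp_bound (X : ENNReal) {B δ : ℝ} (hB : 0 ≤ B) (hδ : 0 ≤ δ) :
    X ≤ ENNReal.ofReal (Real.exp B) * X + ENNReal.ofReal δ := by
  calc X = 1 * X := (one_mul X).symm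
    _ ≤ ENNReal.ofReal (Real.exp B) * X := by
        apply mul_le_mul_left
        rw [← ENNReal.ofReal_one]
        exact ENNReal.ofReal_le_ofReal (by nlinarith [Real.add_one_le_exp B])
    _ ≤ _ := le_self_add

/-- Advanced composition via zCDP: the adaptive composition of `k` pure `ε`-DP algorithms
satisfies `(½kε² + ε√(2k log(1/δ)), δ)`-differential privacy for every `δ ∈ (0,1)`. -/
theorem adaptive_composition_pure_dp {𝒪 : Type*} (pS pS' : ℕ → List 𝒪 → PMF 𝒪)
    (ε : ℝ) (hε : 0 ≤ ε) (k : ℕ)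
    (hDP : ∀ (t : ℕ) (h : List 𝒪) (a : 𝒪),
      (pS t h) a ≤ ENNReal.ofReal (Real.exp ε) * (pS' t h) a ∧
      (pS' t h) a ≤ ENNReal.ofReal (Real.exp ε) * (pS t h) a)
    (δ : ℝ) (hδ0 : 0 < δ) (hδ1 : δ < 1) :
    ∀ E : Set (List 𝒪),
      ∑' h : E, (joint pS k) h ≤
        ENNReal.ofReal (Real.exp (k * ε ^ 2 / 2 + ε * Real.sqrt (2 * k * Real.log (1 / δ))))
          * ∑' h : E, (joint pS' k) h + ENNReal.ofReal δ ∧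
      ∑' h : E, (joint pS' k) h ≤
        ENNReal.ofReal (Real.exp (k * ε ^ 2 / 2 + ε * Real.sqrt (2 * k * Real.log (1 / δ))))
          * ∑' h : E, (joint pS k) h + ENNReal.ofReal δ := by
  intro E
  have hBnn : (0:ℝ) ≤ k * ε ^ 2 / 2 + ε * Real.sqrt (2 * k * Real.log (1 / δ)) :=
    add_nonneg (by positivity) (mul_nonneg hε (Real.sqrt_nonneg _))
  rcases eq_or_lt_of_le hε with hε0 | hεpos
  · -- ε = 0 : the two mechanisms coincide
    have hpq : pS = pS' := by
      funext t h
      apply DFunLike.ext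
      intro a
      have h1 := (hDP t h a).1
      have h2 := (hDP t h a).2
      rw [← hε0, Real.exp_zero, ENNReal.ofReal_one, one_mul] at h1 h2
      exact le_antisymm h1 h2
    rw [hpq]
    exact ⟨triv_dp_bound _ hBnn hδ0.le, triv_dp_bound _ hBnn hδ0.le⟩
  · rcases Nat.eq_zero_or_pos k with rfl | hk
    · have h0 : joint pS 0 = joint pS' 0 := rfl
      rw [h0]
      exact ⟨triv_dp_bound _ hBnn hδ0.le, triv_dp_bound _ hBnn hδ0.le⟩
    · exact ⟨dp_one_sided pS pS' hεpos hk hDP hδ0 hδ1 E,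
        dp_one_sided pS' pS hεpos hk
          (fun t h a => ⟨(hDP t h a).2, (hDP t h a).1⟩) hδ0 hδ1 E⟩
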